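/- Let (G, σ) be a signed graph and let c : V(G) → {−2,−1,1,2} be a signed 4-coloring of (G, σ). Then for every cycle C of G, the number of edges uv of C with σ(uv)·c(u)·c(v) = 2 is congruent modulo 2 to the number of edges e of C with σ(e) = +1. -/

import Mathlib

private lemma filter_len_cast {α : Type*} (p : α → Bool) (l : List α) :
    ((l.filter p).length : ZMod 2) = (l.map (fun d => if p d then (1 : ZMod 2) else 0)).sum := by
  induction l with
  | nil => simp
  | cons a l ih =>
    by_cases h : p a <;> simp [List.filter_cons, h, ih, add_comm]

private lemma walk_dart_sum {V : Type*} {G : SimpleGraph V} (f : V → ZMod 2) :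
    ∀ {u v : V} (p : G.Walk u v),
      (p.darts.map (fun d => f d.fst + f d.snd)).sum = f u + f v := by
  intro u v p
  induction p with
  | nil => simp [CharTwo.add_self_eq_zero]
  | @cons a b w h q ih =>
    simp only [SimpleGraph.Walk.darts_cons, List.map_cons, List.sum_cons, ih]
    linear_combination (CharTwo.add_self_eq_zero (f b) : f b + f b = 0)

/-- **Around any cycle, the number of `a`-type edges has the parity of the number of
positive edges.**  Let `(G, σ)` be a signed graph and `c : V → {-2,-1,1,2}` a signed
4-coloring (i.e. `c u ≠ σ u w * c w` for every edge `u w`).  Then for every cycle `C`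
of `G`, the number of edges `u w` of `C` with `σ u w * c u * c w = 2` is congruent
modulo 2 to the number of edges `e` of `C` with `σ e = 1`. -/
theorem a_edges_parity_eq_positive_edges_parity {V : Type*} [DecidableEq V]
    (G : SimpleGraph V) (σ : V → V → ℤ)
    (hsym : ∀ u w, σ u w = σ w u)
    (hsign : ∀ u w, G.Adj u w → σ u w = 1 ∨ σ u w = -1)
    (c : V → ℤ)
    (hrange : ∀ u, c u = -2 ∨ c u = -1 ∨ c u = 1 ∨ c u = 2)
    (hc : ∀ u w, G.Adj u w → c u ≠ σ u w * c w)
    {u : V} (C : G.Walk u u) (hC : C.IsCycle) :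
    (C.darts.filter (fun d => σ d.fst d.snd * c d.fst * c d.snd = 2)).length
      ≡ (C.darts.filter (fun d => σ d.fst d.snd = 1)).length [MOD 2] := by
  set f : V → ZMod 2 := fun v => if c v < 0 then 1 else 0 with hf
  have key : ∀ d : G.Dart,
      (if σ d.fst d.snd * c d.fst * c d.snd = 2 then (1 : ZMod 2) else 0)
        = (if σ d.fst d.snd = 1 then (1 : ZMod 2) else 0) + (f d.fst + f d.snd) := by
    intro d
    have hadj := d.adj
    have hs := hsign _ _ hadj
    have ha := hrange d.fst
    have hb := hrange d.snd
    have hne := hc _ _ hadj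
    simp only [hf]
    rcases hs with h1 | h1 <;> rcases ha with h2 | h2 | h2 | h2 <;>
      rcases hb with h3 | h3 | h3 | h3 <;>
      rw [h1, h2, h3] at hne ⊢ <;> revert hne <;> decide
  rw [← ZMod.natCast_eq_natCast_iff]
  rw [filter_len_cast, filter_len_cast]
  have : (C.darts.map (fun d => if σ d.fst d.snd * c d.fst * c d.snd = 2 then (1 : ZMod 2) else 0))
      = C.darts.map (fun d => (if σ d.fst d.snd = 1 then (1 : ZMod 2) else 0) + (f d.fst + f d.snd)) := by
    exact List.map_congr_left (fun d _ => by simpa using key d)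
  simp only [decide_eq_true_eq] at this ⊢
  rw [this, List.sum_map_add, walk_dart_sum f C, CharTwo.add_self_eq_zero, add_zero]
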